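/- Let M_1, …, M_k be matroids on the same finite ground set E, with rank functions r_1, …, r_k. Suppose there exist sets V_1, …, V_k ⊆ E such that V_i is independent in M_i for each i and V_1 ∪ … ∪ V_k = E, and suppose A ⊆ E satisfies r_1(A) + … + r_k(A) = |A|. Then there exist sets U_1, …, U_k ⊆ E \ A such that U_i is independent in the contracted matroid M_i/A for each i and U_1 ∪ … ∪ U_k = E \ A. -/

import Mathlib

/-- The rank of a set `A` in the matroid `M`: the largest cardinality of an independent
subset of `A`. -/
noncomputable def rankFun {α : Type*} (M : Matroid α) (A : Set α) : ℕ :=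
  sSup {n : ℕ | ∃ I, I ⊆ A ∧ M.Indep I ∧ I.ncard = n}

/-- `I` is independent in the contraction `M/A` (the matroid on `M.E \ A` whose rank
function is `B ↦ rankFun M (A ∪ B) - rankFun M A`): that is, `I ⊆ M.E \ A` and the rank of
`I` in `M/A` equals its cardinality. -/
def IndepInContract {α : Type*} (M : Matroid α) (A I : Set α) : Prop :=
  I ⊆ M.E \ A ∧ rankFun M (A ∪ I) = rankFun M A + I.ncard

lemma le_rankFun {α : Type*} {M : Matroid α} {A I : Set α} (hA : A.Finite)
    (hIA : I ⊆ A) (hI : M.Indep I) : I.ncard ≤ rankFun M A := by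
  refine le_csSup ⟨A.ncard, ?_⟩ ⟨I, hIA, hI, rfl⟩
  rintro n ⟨J, hJA, -, rfl⟩
  exact Set.ncard_le_ncard hJA hA

lemma exists_rankFun_basis {α : Type*} (M : Matroid α) {A : Set α} (hA : A.Finite) :
    ∃ I, I ⊆ A ∧ M.Indep I ∧ I.ncard = rankFun M A := by
  have h := Nat.sSup_mem (s := {n : ℕ | ∃ I, I ⊆ A ∧ M.Indep I ∧ I.ncard = n})
    ⟨0, ∅, Set.empty_subset _, M.empty_indep, by simp⟩
    ⟨A.ncard, by rintro n ⟨J, hJA, -, rfl⟩; exact Set.ncard_le_ncard hJA hA⟩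
  exact h

lemma rankFun_union_le {α : Type*} (M : Matroid α) {A U : Set α} (hA : A.Finite)
    (hU : U.Finite) : rankFun M (A ∪ U) ≤ rankFun M A + U.ncard := by
  obtain ⟨I, hIAU, hI, hcard⟩ := exists_rankFun_basis M (hA.union hU)
  have hIfin : I.Finite := (hA.union hU).subset hIAU
  have h1 : (I ∩ A).ncard ≤ rankFun M A :=
    le_rankFun hA Set.inter_subset_right (hI.subset Set.inter_subset_left)
  have hsub : I \ A ⊆ U := fun x hx => (hIAU hx.1).resolve_left hx.2
  have h2 : (I \ A).ncard ≤ U.ncard := Set.ncard_le_ncard hsub hU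
  calc rankFun M (A ∪ U) = I.ncard := hcard.symm
    _ = (I ∩ A).ncard + (I \ A).ncard :=
        (Set.ncard_inter_add_ncard_diff_eq_ncard I A hIfin).symm
    _ ≤ rankFun M A + U.ncard := add_le_add h1 h2

lemma ncard_le_sum_inter {α ι : Type*} [DecidableEq ι] (t : Finset ι) (s : Set α)
    (hs : s.Finite) (f : ι → Set α) (h : s ⊆ ⋃ i ∈ t, f i) :
    s.ncard ≤ ∑ i ∈ t, (s ∩ f i).ncard := by
  induction t using Finset.induction_on generalizing s with
  | empty =>
      have hs0 : s = ∅ := by simpa [Set.subset_empty_iff] using h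
      simp [hs0]
  | insert _ _ ha =>
      rename_i a t _
      rw [Finset.sum_insert ha]
      have h1 : s.ncard ≤ (s ∩ f a).ncard + (s \ f a).ncard := by
        rw [Set.ncard_inter_add_ncard_diff_eq_ncard s (f a) hs]
      rename_i ih
      have h2 : (s \ f a).ncard ≤ ∑ i ∈ t, ((s \ f a) ∩ f i).ncard := by
        refine ih _ (hs.diff) (fun x hx => ?_)
        have := h hx.1
        simp only [Finset.mem_insert, Set.mem_iUnion, exists_prop] at this ⊢
        obtain ⟨i, hi, hxi⟩ := this
        rcases hi with rfl | hi
        · exact absurd hxi hx.2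
        · exact ⟨i, hi, hxi⟩
      refine h1.trans (add_le_add le_rfl (h2.trans ?_))
      exact Finset.sum_le_sum fun i _ =>
        Set.ncard_le_ncard (Set.inter_subset_inter_left _ Set.diff_subset) (hs.inter_of_left _)

/-- If `E` is covered by sets `V i` independent in the respective matroids `M i`, and
`A ⊆ E` satisfies `∑ i, rᵢ(A) = |A|`, then `E \ A` is covered by sets `U i` independent in
the respective contractions `M i / A`. -/
theorem cover_contract_of_cover {α : Type*} {k : ℕ} (M : Fin k → Matroid α) (E : Set α)
    (hE : E.Finite) (hground : ∀ i, (M i).E = E)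
    (V : Fin k → Set α) (hV : ∀ i, (M i).Indep (V i)) (hcover : ⋃ i, V i = E)
    (A : Set α) (hA : A ⊆ E) (heq : ∑ i, rankFun (M i) A = A.ncard) :
    ∃ U : Fin k → Set α, (∀ i, U i ⊆ E \ A ∧ IndepInContract (M i) A (U i)) ∧
      ⋃ i, U i = E \ A := by
  have hAfin : A.Finite := hE.subset hA
  have hVE : ∀ i, V i ⊆ E := fun i => (hground i) ▸ (hV i).subset_ground
  have hVfin : ∀ i, (V i).Finite := fun i => hE.subset (hVE i)
  have hle : ∀ i, (A ∩ V i).ncard ≤ rankFun (M i) A := fun i =>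
    le_rankFun hAfin Set.inter_subset_left ((hV i).subset Set.inter_subset_right)
  have hAcov : A.ncard ≤ ∑ i, (A ∩ V i).ncard := by
    refine ncard_le_sum_inter Finset.univ A hAfin V (fun x hx => ?_)
    have : x ∈ ⋃ i, V i := hcover ▸ hA hx
    simpa using this
  have hsum : ∑ i, (A ∩ V i).ncard = ∑ i, rankFun (M i) A :=
    le_antisymm (Finset.sum_le_sum fun i _ => hle i) (heq ▸ hAcov)
  have hbasis : ∀ i, (A ∩ V i).ncard = rankFun (M i) A := fun i =>
    (Finset.sum_eq_sum_iff_of_le (fun i _ => hle i)).mp hsum i (Finset.mem_univ i)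
  refine ⟨fun i => V i \ A, fun i => ?_, ?_⟩
  · have hsub : V i \ A ⊆ E \ A := Set.diff_subset_diff_left (hVE i)
    refine ⟨hsub, (hground i) ▸ hsub, le_antisymm
      (rankFun_union_le (M i) hAfin ((hVfin i).diff)) ?_⟩
    have hunion : (A ∩ V i) ∪ (V i \ A) = V i := by
      ext x; by_cases hx : x ∈ A <;> simp [hx]
    have hcard : (V i).ncard = (A ∩ V i).ncard + (V i \ A).ncard := by
      rw [Set.inter_comm]
      exact (Set.ncard_inter_add_ncard_diff_eq_ncard (V i) A (hVfin i)).symm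
    have hle2 : (V i).ncard ≤ rankFun (M i) (A ∪ (V i \ A)) := by
      refine le_rankFun (hAfin.union ((hVfin i).diff)) (fun x hx => ?_) (hV i)
      by_cases hxA : x ∈ A
      · exact Or.inl hxA
      · exact Or.inr ⟨hx, hxA⟩
    rw [hcard, hbasis i] at hle2
    exact hle2
  · rw [← Set.iUnion_diff, hcover]
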